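/- The Riemann zeta value ζ(3) satisfies ζ(3) = (3/2) SLs(3; π/3) = (3/2) ∫_0^{π/3} (θ - π/3) log|2 sin(θ/2)| dθ. -/

import Mathlib

open Real MeasureTheory Filter Topology intervalIntegral

lemma cos_int (m : ℕ) (hm : 0 < m) (σ : ℝ) :
    ∫ θ in (0:ℝ)..σ, (θ - σ) * Real.cos (m * θ) = (Real.cos (m * σ) - 1) / (m:ℝ) ^ 2 := by
  have hm' : (m:ℝ) ≠ 0 := Nat.cast_ne_zero.mpr hm.ne'
  have key : ∀ x ∈ Set.uIcc (0:ℝ) σ, HasDerivAt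
      (fun θ : ℝ => (θ - σ) * Real.sin (m * θ) / m + Real.cos (m * θ) / m ^ 2)
      ((x - σ) * Real.cos (m * x)) x := by
    intro x _
    have h1 : HasDerivAt (fun θ : ℝ => Real.sin (m * θ)) (Real.cos (m * x) * m) x := by
      have := (Real.hasDerivAt_sin (m * x)).comp x ((hasDerivAt_id x).const_mul (m:ℝ))
      simpa [Function.comp_def, mul_comm] using this
    have h2 : HasDerivAt (fun θ : ℝ => Real.cos (m * θ)) (-Real.sin (m * x) * m) x := by
      have := (Real.hasDerivAt_cos (m * x)).comp x ((hasDerivAt_id x).const_mul (m:ℝ))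
      simpa [Function.comp_def, mul_comm] using this
    have h3 : HasDerivAt (fun θ : ℝ => θ - σ) 1 x := (hasDerivAt_id x).sub_const σ
    have := ((h3.mul h1).div_const (m:ℝ)).add (h2.div_const ((m:ℝ)^2))
    refine this.congr_deriv ?_
    field_simp
    ring
  rw [integral_eq_sub_of_hasDerivAt key
    (Continuous.intervalIntegrable (by continuity) _ _)]
  simp only [sub_self, zero_mul, Real.sin_zero, mul_zero, Real.cos_zero]
  field_simp
  ring

lemma log_series (r θ : ℝ) (h0 : 0 ≤ r) (h1 : r < 1) :
    HasSum (fun m : ℕ+ => r ^ (m:ℕ) * Real.cos (m * θ) / m)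
      (-Real.log (‖1 - r * Complex.exp (θ * Complex.I)‖)) := by
  set z : ℂ := (r:ℂ) * Complex.exp (θ * Complex.I) with hz
  have hnz : ‖z‖ < 1 := by
    rw [hz, norm_mul, Complex.norm_real, Real.norm_eq_abs,
      Complex.norm_exp_ofReal_mul_I, mul_one, abs_of_nonneg h0]
    exact h1
  have H := Complex.hasSum_re (Complex.hasSum_taylorSeries_neg_log hnz)
  have hre : ∀ n : ℕ, (z ^ n / (n:ℂ)).re = r ^ n * Real.cos (n * θ) / n := by
    intro n
    have hzn : z ^ n = ((r ^ n : ℝ) : ℂ) * Complex.exp ((n * θ : ℝ) * Complex.I) := by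
      rw [hz, mul_pow, ← Complex.exp_nat_mul]
      push_cast
      ring_nf
    rw [Complex.div_natCast_re, hzn, Complex.re_ofReal_mul, Complex.exp_ofReal_mul_I_re]
  have H2 : HasSum (fun n : ℕ => r ^ n * Real.cos (n * θ) / n)
      (-Real.log (‖1 - z‖)) := by
    have : (-Complex.log (1 - z)).re = -Real.log (‖1 - z‖) := by
      rw [Complex.neg_re, Complex.log_re]
    rw [← this]
    exact H.congr_fun fun n => (hre n).symm
  -- transfer ℕ → ℕ+
  have hinj : Function.Injective (fun m : ℕ+ => (m : ℕ)) := fun a b h => PNat.coe_injective h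
  refine (Function.Injective.hasSum_iff hinj ?_).mpr H2
  intro n hn
  have : n = 0 := by
    by_contra h
    exact hn ⟨⟨n, Nat.pos_of_ne_zero h⟩, rfl⟩
  simp [this]

lemma step_r (σ : ℝ) (hσ : 0 < σ) (r : ℝ) (h0 : 0 ≤ r) (h1 : r < 1) :
    ∫ θ in Set.Ioc (0:ℝ) σ,
        (θ - σ) * Real.log (‖1 - r * Complex.exp (θ * Complex.I)‖)
      = ∑' m : ℕ+, r ^ (m:ℕ) * (1 - Real.cos (m * σ)) / (m:ℝ) ^ 3 := by
  set F : ℕ+ → ℝ → ℝ := fun m θ => (σ - θ) * (r ^ (m:ℕ) * Real.cos (m * θ) / m) with hF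
  have hcont : ∀ m : ℕ+, Continuous (F m) := by
    intro m; fun_prop
  have hF_int : ∀ m : ℕ+, Integrable (F m) (volume.restrict (Set.Ioc 0 σ)) := fun m =>
    (hcont m).integrableOn_Ioc
  have hbound : ∀ (m : ℕ+) (θ : ℝ), θ ∈ Set.Ioc (0:ℝ) σ → ‖F m θ‖ ≤ σ * r ^ (m:ℕ) := by
    intro m θ hθ
    have h1' : |σ - θ| ≤ σ := by rw [abs_of_nonneg (by linarith [hθ.2])]; linarith [hθ.1]
    have h2' : |r ^ (m:ℕ) * Real.cos (m * θ) / m| ≤ r ^ (m:ℕ) := by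
      rw [abs_div, abs_mul, abs_pow, abs_of_nonneg h0]
      have hm1 : (1:ℝ) ≤ (m:ℝ) := by exact_mod_cast m.one_le
      calc r ^ (m:ℕ) * |Real.cos (m * θ)| / |(m:ℝ)| ≤ r ^ (m:ℕ) * 1 / 1 := by
            apply div_le_div₀ (by positivity)
              (mul_le_mul_of_nonneg_left (Real.abs_cos_le_one _) (by positivity))
              one_pos (by rwa [abs_of_pos (by linarith)])
        _ = r ^ (m:ℕ) := by ring
    calc ‖F m θ‖ = |σ - θ| * |r ^ (m:ℕ) * Real.cos (m * θ) / m| := by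
          rw [hF]; exact abs_mul _ _
      _ ≤ σ * r ^ (m:ℕ) := mul_le_mul h1' h2' (abs_nonneg _) hσ.le
  have hF_sum : Summable fun m : ℕ+ => ∫ θ, ‖F m θ‖ ∂(volume.restrict (Set.Ioc 0 σ)) := by
    have hgeo : Summable fun m : ℕ+ => σ * r ^ (m:ℕ) * σ := by
      apply Summable.mul_right
      apply Summable.mul_left
      exact (summable_geometric_of_lt_one h0 h1).comp_injective
        (fun a b h => PNat.coe_injective h)
    refine hgeo.of_nonneg_of_le (fun m => integral_nonneg fun θ => norm_nonneg _) fun m => ?_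
    have := norm_setIntegral_le_of_norm_le_const (C := σ * r ^ (m:ℕ))
      (μ := volume) (s := Set.Ioc (0:ℝ) σ) (f := fun θ => ‖F m θ‖)
      (by simp [Real.volume_Ioc])
      (fun θ hθ => by rw [Real.norm_eq_abs, abs_of_nonneg (norm_nonneg _)]; exact hbound m θ hθ)
    calc (∫ θ, ‖F m θ‖ ∂(volume.restrict (Set.Ioc 0 σ)))
        ≤ ‖∫ θ in Set.Ioc (0:ℝ) σ, ‖F m θ‖‖ := le_abs_self _
      _ ≤ σ * r ^ (m:ℕ) * (volume (Set.Ioc (0:ℝ) σ)).toReal := this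
      _ = σ * r ^ (m:ℕ) * σ := by
          rw [Real.volume_Ioc, ENNReal.toReal_ofReal (by linarith)]; ring_nf
  have key := integral_tsum_of_summable_integral_norm hF_int hF_sum
  have hLHS : ∀ θ : ℝ, (∑' m : ℕ+, F m θ)
      = (θ - σ) * Real.log (‖1 - r * Complex.exp (θ * Complex.I)‖) := by
    intro θ
    have := ((log_series r θ h0 h1).mul_left (σ - θ)).tsum_eq
    rw [hF]; rw [this]; ring
  have hterm : ∀ m : ℕ+, (∫ θ, F m θ ∂(volume.restrict (Set.Ioc 0 σ)))
      = r ^ (m:ℕ) * (1 - Real.cos (m * σ)) / (m:ℝ) ^ 3 := by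
    intro m
    have hm1 : (0:ℝ) < (m:ℝ) := by exact_mod_cast m.pos
    have : (∫ θ in Set.Ioc (0:ℝ) σ, F m θ)
        = ∫ θ in (0:ℝ)..σ, (-(r ^ (m:ℕ) / m)) * ((θ - σ) * Real.cos (m * θ)) := by
      rw [intervalIntegral.integral_of_le hσ.le]
      apply setIntegral_congr_fun measurableSet_Ioc
      intro θ _
      rw [hF]; ring
    rw [this, intervalIntegral.integral_const_mul, cos_int m m.pos σ]
    field_simp
    ring
  calc ∫ θ in Set.Ioc (0:ℝ) σ,
          (θ - σ) * Real.log (‖1 - r * Complex.exp (θ * Complex.I)‖)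
      = ∫ θ in Set.Ioc (0:ℝ) σ, (∑' m : ℕ+, F m θ) := by
        apply setIntegral_congr_fun measurableSet_Ioc
        intro θ _
        exact (hLHS θ).symm
    _ = ∑' m : ℕ+, (∫ θ, F m θ ∂(volume.restrict (Set.Ioc 0 σ))) := key.symm
    _ = ∑' m : ℕ+, r ^ (m:ℕ) * (1 - Real.cos (m * σ)) / (m:ℝ) ^ 3 := tsum_congr hterm

lemma integrableOn_log' (b : ℝ) (hb : 0 < b) : IntegrableOn Real.log (Set.Ioc 0 b) := by
  set C := |Real.log b| with hC
  have hderiv : ∀ x ∈ Set.Ioo (0:ℝ) b,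
      HasDerivAt (fun x => (C + 1) * x - x * Real.log x) (C - Real.log x) x := by
    intro x hx
    have h1 : HasDerivAt (fun x : ℝ => (C + 1) * x) (C + 1) x := by
      simpa using (hasDerivAt_id x).const_mul (C + 1)
    have h2 := Real.hasDerivAt_mul_log (ne_of_gt hx.1)
    have := h1.sub h2
    refine this.congr_deriv ?_; ring
  have hcont : ContinuousOn (fun x => (C + 1) * x - x * Real.log x) (Set.Icc 0 b) :=
    ((continuous_const.mul continuous_id).sub Real.continuous_mul_log).continuousOn
  have hnonneg : ∀ x ∈ Set.Ioo (0:ℝ) b, 0 ≤ C - Real.log x := by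
    intro x hx
    have : Real.log x ≤ Real.log b := Real.log_le_log hx.1 hx.2.le
    have : Real.log x ≤ C := this.trans (le_abs_self _)
    linarith
  have key : IntegrableOn (fun x => C - Real.log x) (Set.Ioc 0 b) :=
    intervalIntegral.integrableOn_deriv_of_nonneg hcont hderiv hnonneg
  have hconst : IntegrableOn (fun _ : ℝ => C) (Set.Ioc 0 b) := by
    exact integrableOn_const (by simp [Real.volume_Ioc])
  have h := hconst.sub key
  have : ((fun _ : ℝ => C) - fun x => C - Real.log x) = Real.log := by
    funext x; simp
  rwa [this] at h

lemma abs_sq_eq (r θ : ℝ) :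
    ‖1 - r * Complex.exp (θ * Complex.I)‖ ^ 2
      = 1 - 2 * r * Real.cos θ + r ^ 2 := by
  rw [Complex.sq_norm, Complex.normSq_apply]
  have hre : (1 - (r:ℂ) * Complex.exp (θ * Complex.I)).re = 1 - r * Real.cos θ := by
    simp [Complex.sub_re, Complex.re_ofReal_mul, Complex.exp_ofReal_mul_I_re]
  have him : (1 - (r:ℂ) * Complex.exp (θ * Complex.I)).im = -(r * Real.sin θ) := by
    simp [Complex.sub_im, Complex.im_ofReal_mul, Complex.exp_ofReal_mul_I_im]
  rw [hre, him]
  nlinarith [Real.sin_sq_add_cos_sq θ]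

lemma abs_lower (r θ : ℝ) (hθ0 : 0 < θ) (hθ : θ ≤ π / 2) :
    θ / 2 ≤ ‖1 - r * Complex.exp (θ * Complex.I)‖ := by
  have hsin : 2 / π * θ ≤ Real.sin θ := Real.mul_le_sin hθ0.le hθ
  have hπ : 0 < π := Real.pi_pos
  have h1 : θ / 2 ≤ Real.sin θ := by
    have hc : (1:ℝ) / 2 ≤ 2 / π := by
      rw [div_le_div_iff₀ (by norm_num) hπ]
      nlinarith [Real.pi_le_four]
    nlinarith
  have hsq : Real.sin θ ^ 2 ≤ ‖1 - r * Complex.exp (θ * Complex.I)‖ ^ 2 := by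
    rw [abs_sq_eq]
    nlinarith [Real.sin_sq_add_cos_sq θ, sq_nonneg (r - Real.cos θ)]
  have hs0 : 0 ≤ Real.sin θ := by linarith
  have habs : Real.sin θ ≤ ‖1 - r * Complex.exp (θ * Complex.I)‖ := by
    nlinarith [norm_nonneg (1 - (r:ℂ) * Complex.exp (θ * Complex.I))]
  linarith

lemma abs_upper (r θ : ℝ) (h0 : 0 ≤ r) (h1 : r ≤ 1) :
    ‖1 - r * Complex.exp (θ * Complex.I)‖ ≤ 2 := by
  calc ‖1 - r * Complex.exp (θ * Complex.I)‖
      ≤ ‖(1:ℂ)‖ + ‖r * Complex.exp (θ * Complex.I)‖ := by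
        exact (norm_sub_le _ _)
    _ ≤ 1 + 1 := by
        rw [norm_one]
        gcongr
        rw [norm_mul, Complex.norm_real, Real.norm_eq_abs, Complex.norm_exp_ofReal_mul_I, mul_one,
          abs_of_nonneg h0]
        exact h1
    _ = 2 := by norm_num

lemma log_bound (r θ : ℝ) (h0 : 0 ≤ r) (h1 : r ≤ 1) (hθ0 : 0 < θ) (hθ : θ ≤ π / 2) :
    |Real.log (‖1 - r * Complex.exp (θ * Complex.I)‖)|
      ≤ 2 * Real.log 2 + |Real.log θ| := by
  set A := ‖1 - r * Complex.exp (θ * Complex.I)‖ with hA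
  have hlow : θ / 2 ≤ A := abs_lower r θ hθ0 hθ
  have hup : A ≤ 2 := abs_upper r θ h0 h1
  have hA0 : 0 < A := lt_of_lt_of_le (by linarith) hlow
  have hub : Real.log A ≤ Real.log 2 := Real.log_le_log hA0 hup
  have hlb : Real.log (θ / 2) ≤ Real.log A := Real.log_le_log (by linarith) hlow
  rw [Real.log_div (ne_of_gt hθ0) (by norm_num)] at hlb
  rw [abs_le]
  constructor
  · have : -|Real.log θ| ≤ Real.log θ := neg_abs_le _
    nlinarith [Real.log_nonneg (by norm_num : (1:ℝ) ≤ 2)]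
  · have : Real.log 2 ≤ 2 * Real.log 2 + |Real.log θ| := by
      nlinarith [Real.log_nonneg (by norm_num : (1:ℝ) ≤ 2), abs_nonneg (Real.log θ)]
    linarith

lemma lim_lemma (σ : ℝ) (hσ0 : 0 < σ) (hσ : σ ≤ π / 2) :
    (∫ θ in Set.Ioc (0:ℝ) σ,
        (θ - σ) * Real.log (‖1 - Complex.exp (θ * Complex.I)‖))
      = ∑' m : ℕ+, (1 - Real.cos (m * σ)) / (m:ℝ) ^ 3 := by
  set u : ℕ → ℝ := fun n => 1 - ((n:ℝ) + 1)⁻¹ with hu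
  have hu0 : ∀ n, 0 ≤ u n := by
    intro n
    have h1 : ((n:ℝ) + 1)⁻¹ ≤ 1 := by
      rw [inv_le_one_iff₀]; right; exact le_add_of_nonneg_left (Nat.cast_nonneg n)
    simp [hu]; linarith
  have hu1 : ∀ n, u n < 1 := by
    intro n
    have : 0 < ((n:ℝ) + 1)⁻¹ := by positivity
    simp [hu]; linarith
  have hulim : Tendsto u atTop (𝓝 1) := by
    have := tendsto_one_div_add_atTop_nhds_zero_nat (𝕜 := ℝ)
    have h2 := tendsto_const_nhds (x := (1:ℝ)) (f := atTop (α := ℕ)) |>.sub this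
    simpa [hu, one_div] using h2
  -- LHS convergence
  have hL : Tendsto
      (fun n => ∫ θ in Set.Ioc (0:ℝ) σ,
        (θ - σ) * Real.log (‖1 - u n * Complex.exp (θ * Complex.I)‖))
      atTop
      (𝓝 (∫ θ in Set.Ioc (0:ℝ) σ,
        (θ - σ) * Real.log (‖1 - Complex.exp (θ * Complex.I)‖))) := by
    apply tendsto_integral_of_dominated_convergence
      (bound := fun θ => σ * (2 * Real.log 2 + |Real.log θ|))
    · intro n
      apply Measurable.aestronglyMeasurable
      apply Measurable.mul (by fun_prop)
      exact Real.measurable_log.comp (continuous_norm.comp (by fun_prop)).measurable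
    · apply Integrable.const_mul
      apply Integrable.add
      · exact integrableOn_const (by simp [Real.volume_Ioc])
      · exact (integrableOn_log' σ hσ0).abs
    · intro n
      rw [ae_restrict_iff' measurableSet_Ioc]
      apply ae_of_all
      intro θ hθ
      rw [Real.norm_eq_abs, abs_mul]
      have h1 : |θ - σ| ≤ σ := by
        rw [abs_of_nonpos (by linarith [hθ.2])]; linarith [hθ.1]
      exact mul_le_mul h1
        (log_bound (u n) θ (hu0 n) (hu1 n).le hθ.1 (hθ.2.trans hσ))
        (abs_nonneg _) hσ0.le
    · rw [ae_restrict_iff' measurableSet_Ioc]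
      apply ae_of_all
      intro θ hθ
      have hne : ‖1 - (1:ℝ) * Complex.exp (θ * Complex.I)‖ ≠ 0 := by
        have h := abs_lower 1 θ hθ.1 (hθ.2.trans hσ)
        have : (0:ℝ) < θ / 2 := by linarith [hθ.1]
        exact ne_of_gt (lt_of_lt_of_le this h)
      have hc : ContinuousAt
          (fun r : ℝ => Real.log (‖1 - r * Complex.exp (θ * Complex.I)‖)) 1 := by
        have hc1 : ContinuousAt (fun r : ℝ => ‖1 - r * Complex.exp (θ * Complex.I)‖) 1 :=
          (continuous_norm.comp (by fun_prop)).continuousAt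
        exact hc1.log hne
      have := ((hc.tendsto.comp hulim).const_mul (θ - σ))
      simpa using this
  -- RHS convergence
  have hR : Tendsto
      (fun n => ∑' m : ℕ+, u n ^ (m:ℕ) * (1 - Real.cos (m * σ)) / (m:ℝ) ^ 3) atTop
      (𝓝 (∑' m : ℕ+, (1 - Real.cos (m * σ)) / (m:ℝ) ^ 3)) := by
    apply tendsto_tsum_of_dominated_convergence (bound := fun m : ℕ+ => 2 / (m:ℝ) ^ 3)
    · have hbase : Summable (fun n : ℕ => 1 / (n:ℝ) ^ 3) :=
        Real.summable_one_div_nat_pow.mpr (by norm_num)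
      have := (hbase.comp_injective (fun a b h => PNat.coe_injective h)).mul_left (2:ℝ)
      apply this.congr
      intro m
      simp [Function.comp]
      ring
    · intro m
      have h := ((hulim.pow (m:ℕ)).mul_const (1 - Real.cos (m * σ))).div_const ((m:ℝ) ^ 3)
      simpa using h
    · apply Eventually.of_forall
      intro n m
      rw [Real.norm_eq_abs, abs_div, abs_mul, abs_pow, abs_of_nonneg (hu0 n)]
      have hm : (0:ℝ) < (m:ℝ) ^ 3 := by positivity
      rw [abs_of_pos hm]
      have h1 : u n ^ (m:ℕ) ≤ 1 := pow_le_one₀ (hu0 n) (hu1 n).le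
      have h2 : |1 - Real.cos (m * σ)| ≤ 2 := by
        have ha := Real.neg_one_le_cos ((m:ℝ) * σ)
        have hb := Real.cos_le_one ((m:ℝ) * σ)
        rw [abs_le]; constructor <;> linarith
      have h3 : u n ^ (m:ℕ) * |1 - Real.cos (m * σ)| ≤ 2 := by
        nlinarith [pow_nonneg (hu0 n) (m:ℕ), abs_nonneg (1 - Real.cos ((m:ℝ) * σ))]
      rw [div_le_div_iff₀ hm hm]
      nlinarith
  have heq : ∀ n, (∫ θ in Set.Ioc (0:ℝ) σ,
        (θ - σ) * Real.log (‖1 - u n * Complex.exp (θ * Complex.I)‖))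
      = ∑' m : ℕ+, u n ^ (m:ℕ) * (1 - Real.cos (m * σ)) / (m:ℝ) ^ 3 :=
    fun n => step_r σ hσ0 (u n) (hu0 n) (hu1 n)
  exact tendsto_nhds_unique (hL.congr heq) hR

lemma div_hasSum (S : ℝ) (hS : HasSum (fun m : ℕ+ => (1:ℝ) / (m:ℝ) ^ 3) S) (d : ℕ+) :
    HasSum (fun m : ℕ+ => if (d:ℕ) ∣ (m:ℕ) then (1:ℝ) / (m:ℝ) ^ 3 else 0)
      (S / (d:ℝ) ^ 3) := by
  have hmul : HasSum (fun k : ℕ+ => (1:ℝ) / ((d:ℝ) ^ 3) * ((1:ℝ) / (k:ℝ) ^ 3))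
      ((1:ℝ) / ((d:ℝ) ^ 3) * S) := hS.mul_left _
  have hinj : Function.Injective (fun k : ℕ+ => d * k) := fun a b h => by
    exact mul_left_cancel h
  rw [show S / (d:ℝ) ^ 3 = (1:ℝ) / ((d:ℝ) ^ 3) * S by ring]
  refine (Function.Injective.hasSum_iff hinj ?_).mp ?_
  · intro m hm
    rw [if_neg]
    intro hdvd
    obtain ⟨j, hj⟩ := hdvd
    have hj0 : 0 < j := by
      rcases Nat.eq_zero_or_pos j with h | h
      · exfalso; rw [h, mul_zero] at hj; have := m.pos; omega
      · exact h
    exact hm ⟨⟨j, hj0⟩, by apply PNat.coe_injective; rw [hj]; rfl⟩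
  · apply hmul.congr_fun
    intro k
    have : ((d:ℕ) ∣ ((d * k : ℕ+) : ℕ)) := by
      rw [PNat.mul_coe]; exact Dvd.intro k rfl
    simp only [Function.comp, this, if_pos]
    rw [PNat.mul_coe]
    push_cast
    rw [mul_pow]
    field_simp
    
lemma cos_pnat (m : ℕ+) :
    Real.cos ((m:ℕ) * (π / 3)) =
      1 / 2 - (if 2 ∣ (m:ℕ) then (1:ℝ) else 0) - 3 / 2 * (if 3 ∣ (m:ℕ) then (1:ℝ) else 0)
        + 3 * (if 6 ∣ (m:ℕ) then (1:ℝ) else 0) := by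
  obtain ⟨q, s, hs, hm⟩ : ∃ q s : ℕ, s < 6 ∧ (m:ℕ) = 6 * q + s :=
    ⟨(m:ℕ) / 6, (m:ℕ) % 6, Nat.mod_lt _ (by norm_num), (Nat.div_add_mod _ 6).symm⟩
  have hcast : ((m:ℕ):ℝ) * (π / 3) = (s:ℝ) * (π / 3) + (q:ℤ) * (2 * π) := by
    rw [hm]; push_cast; ring
  rw [hcast, Real.cos_add_int_mul_two_pi]
  interval_cases s
  · have h2 : 2 ∣ (m:ℕ) := by omega
    have h3 : 3 ∣ (m:ℕ) := by omega
    have h6 : 6 ∣ (m:ℕ) := by omega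
    simp [h2, h3, h6]
    try norm_num
  · have h2 : ¬ 2 ∣ (m:ℕ) := by omega
    have h3 : ¬ 3 ∣ (m:ℕ) := by omega
    have h6 : ¬ 6 ∣ (m:ℕ) := by omega
    simp [h2, h3, h6, Real.cos_pi_div_three]
    try norm_num
  · have h2 : 2 ∣ (m:ℕ) := by omega
    have h3 : ¬ 3 ∣ (m:ℕ) := by omega
    have h6 : ¬ 6 ∣ (m:ℕ) := by omega
    have : ((2:ℕ):ℝ) * (π / 3) = π - π / 3 := by push_cast; ring
    rw [this, Real.cos_pi_sub, Real.cos_pi_div_three]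
    simp [h2, h3, h6]
    try norm_num
  · have h2 : ¬ 2 ∣ (m:ℕ) := by omega
    have h3 : 3 ∣ (m:ℕ) := by omega
    have h6 : ¬ 6 ∣ (m:ℕ) := by omega
    have : ((3:ℕ):ℝ) * (π / 3) = π := by push_cast; ring
    rw [this, Real.cos_pi]
    simp [h2, h3, h6]
    try norm_num
  · have h2 : 2 ∣ (m:ℕ) := by omega
    have h3 : ¬ 3 ∣ (m:ℕ) := by omega
    have h6 : ¬ 6 ∣ (m:ℕ) := by omega
    have : ((4:ℕ):ℝ) * (π / 3) = π / 3 + π := by push_cast; ring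
    rw [this, Real.cos_add_pi, Real.cos_pi_div_three]
    simp [h2, h3, h6]
    try norm_num
  · have h2 : ¬ 2 ∣ (m:ℕ) := by omega
    have h3 : ¬ 3 ∣ (m:ℕ) := by omega
    have h6 : ¬ 6 ∣ (m:ℕ) := by omega
    have : ((5:ℕ):ℝ) * (π / 3) = 2 * π - π / 3 := by push_cast; ring
    rw [this, Real.cos_two_pi_sub, Real.cos_pi_div_three]
    simp [h2, h3, h6]
    try norm_num

lemma bridge (θ : ℝ) (h0 : 0 ≤ θ) (hπ : θ ≤ π) :
    ‖1 - Complex.exp (θ * Complex.I)‖ = |2 * Real.sin (θ / 2)| := by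
  have hs : 0 ≤ Real.sin (θ / 2) :=
    Real.sin_nonneg_of_nonneg_of_le_pi (by linarith) (by linarith [Real.pi_pos])
  have hsq : ‖1 - Complex.exp (θ * Complex.I)‖ ^ 2
      = (2 * Real.sin (θ / 2)) ^ 2 := by
    have h1 := abs_sq_eq 1 θ
    rw [Complex.ofReal_one, one_mul] at h1
    rw [h1]
    have h2 := Real.cos_two_mul (θ / 2)
    rw [show 2 * (θ / 2) = θ by ring] at h2
    have h3 := Real.sin_sq_add_cos_sq (θ / 2)
    nlinarith
  have ha := norm_nonneg (1 - Complex.exp (θ * Complex.I))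
  have hb : (0:ℝ) ≤ 2 * Real.sin (θ / 2) := by linarith
  calc ‖1 - Complex.exp (θ * Complex.I)‖
      = Real.sqrt (‖1 - Complex.exp (θ * Complex.I)‖ ^ 2) :=
        (Real.sqrt_sq ha).symm
    _ = Real.sqrt ((2 * Real.sin (θ / 2)) ^ 2) := by rw [hsq]
    _ = 2 * Real.sin (θ / 2) := Real.sqrt_sq hb
    _ = |2 * Real.sin (θ / 2)| := (abs_of_nonneg hb).symm

/-- `ζ(3) = (3/2) SLs(3; π/3) = (3/2) ∫_0^{π/3} (θ - π/3) log|2 sin(θ/2)| dθ`. -/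
theorem stmt14 :
    (∑' m : ℕ+, (1 : ℝ) / (m : ℝ) ^ 3) =
      3 / 2 * ∫ θ in (0:ℝ)..(π / 3), (θ - π / 3) * Real.log |2 * Real.sin (θ / 2)| := by
  have hσ0 : (0:ℝ) < π / 3 := by positivity
  have hσ : π / 3 ≤ π / 2 := by linarith [Real.pi_pos]
  have hsummable : Summable (fun m : ℕ+ => (1:ℝ) / (m:ℝ) ^ 3) :=
    (Real.summable_one_div_nat_pow.mpr (by norm_num)).comp_injective
      (fun a b h => PNat.coe_injective h)
  set S : ℝ := ∑' m : ℕ+, (1:ℝ) / (m:ℝ) ^ 3 with hSdef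
  have hS : HasSum (fun m : ℕ+ => (1:ℝ) / (m:ℝ) ^ 3) S := hsummable.hasSum
  have hd2 : HasSum (fun m : ℕ+ => if 2 ∣ (m:ℕ) then (1:ℝ) / (m:ℝ) ^ 3 else 0) (S / 8) := by
    have h := div_hasSum S hS 2
    norm_num at h
    convert h using 2
    norm_num
  have hd3 : HasSum (fun m : ℕ+ => if 3 ∣ (m:ℕ) then (1:ℝ) / (m:ℝ) ^ 3 else 0) (S / 27) := by
    have h := div_hasSum S hS 3
    norm_num at h
    convert h using 2
    norm_num
  have hd6 : HasSum (fun m : ℕ+ => if 6 ∣ (m:ℕ) then (1:ℝ) / (m:ℝ) ^ 3 else 0) (S / 216) := by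
    have h := div_hasSum S hS 6
    norm_num at h
    convert h using 2
    norm_num
  have Hcos : HasSum (fun m : ℕ+ => Real.cos ((m:ℕ) * (π / 3)) / (m:ℝ) ^ 3) (S / 3) := by
    have H := (((hS.mul_left (1/2)).sub hd2).sub (hd3.mul_left (3/2))).add (hd6.mul_left 3)
    have hv : 1/2 * S - S/8 - 3/2 * (S/27) + 3 * (S/216) = S / 3 := by ring
    rw [hv] at H
    apply H.congr_fun
    intro m
    rw [cos_pnat m]
    split_ifs <;> ring
  have hfinal : HasSum (fun m : ℕ+ => (1 - Real.cos ((m:ℕ) * (π / 3))) / (m:ℝ) ^ 3)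
      (S - S / 3) := by
    apply (hS.sub Hcos).congr_fun
    intro m
    rw [sub_div]
  have hint : (∫ θ in (0:ℝ)..(π / 3), (θ - π / 3) * Real.log |2 * Real.sin (θ / 2)|)
      = ∑' m : ℕ+, (1 - Real.cos ((m:ℕ) * (π / 3))) / (m:ℝ) ^ 3 := by
    rw [intervalIntegral.integral_of_le hσ0.le, ← lim_lemma (π / 3) hσ0 hσ]
    apply MeasureTheory.setIntegral_congr_fun measurableSet_Ioc
    intro θ hθ
    show (θ - π / 3) * Real.log |2 * Real.sin (θ / 2)|
      = (θ - π / 3) * Real.log (‖1 - Complex.exp (θ * Complex.I)‖)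
    rw [bridge θ hθ.1.le (by linarith [hθ.2, Real.pi_pos])]
  rw [hint, hfinal.tsum_eq]
  ring
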